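/- Let s be Sylvester's sequence and x ∈ ℝ^{n+1} with x_i ≥ -1 for all i and some x_j > -1 for j < n. If x_n = -∑_{i=0}^{n-1} ((s_n-1)/s_i)·x_i, then x_n < s_n - 2. -/

import Mathlib

theorem highest_point_bound (s : ℕ → ℕ) (h0 : s 0 = 2)
    (hrec : ∀ k, s (k + 1) = s k ^ 2 - s k + 1) (n : ℕ)
    (x : Fin (n + 1) → ℝ) (hx1 : ∀ i, -1 ≤ x i)
    (hx2 : ∃ j : Fin (n + 1), (j : ℕ) < n ∧ -1 < x j)
    (hx3 : x (Fin.last n) =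
      -(∑ i : Fin n, (((s n : ℝ) - 1) / (s (i : ℕ) : ℝ)) * x i.castSucc)) :
    x (Fin.last n) < (s n : ℝ) - 2 := by
  -- s k ≥ 2 for all k
  have hs2 : ∀ k, 2 ≤ s k := by
    intro k
    induction k with
    | zero => omega
    | succ k ih =>
      have h1 : s k * 2 ≤ s k ^ 2 := by nlinarith
      rw [hrec k]; nlinarith [Nat.sub_add_cancel (le_of_lt (lt_of_lt_of_le (by nlinarith : s k < s k * 2) h1))]
  have hsR : ∀ k, (2:ℝ) ≤ (s k : ℝ) := fun k => by exact_mod_cast hs2 k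
  have hrecR : ∀ k, (s (k+1) : ℝ) = (s k : ℝ)^2 - s k + 1 := by
    intro k
    have h1 : s k ≤ s k ^ 2 := by nlinarith [hs2 k]
    rw [hrec k]
    push_cast [Nat.sub_add_cancel h1, h1]
    ring
  -- key identity: ∑ 1/s_i = 1 - 1/(s_n - 1)
  have key : ∀ m, ∑ i : Fin m, (1 / (s (i:ℕ) : ℝ)) = 1 - 1 / ((s m : ℝ) - 1) := by
    intro m
    induction m with
    | zero => simp [h0]; norm_num
    | succ m ih =>
      rw [Fin.sum_univ_castSucc]
      simp only [Fin.coe_castSucc, Fin.val_last]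
      rw [ih, hrecR m]
      have h1 : (s m : ℝ) - 1 ≠ 0 := by have := hsR m; linarith
      have h2 : (s m : ℝ) ≠ 0 := by have := hsR m; linarith
      have h3 : -(s m : ℝ) + (s m:ℝ)^2 ≠ 0 := by nlinarith [hsR m]
      field_simp
      ring
  set c : Fin n → ℝ := fun i => ((s n : ℝ) - 1) / (s (i:ℕ) : ℝ) with hc
  have hsn1 : (s n : ℝ) - 1 ≠ 0 := by have := hsR n; linarith
  have hcsum : ∑ i : Fin n, c i = (s n : ℝ) - 2 := by
    have : ∑ i : Fin n, c i = ((s n : ℝ) - 1) * ∑ i : Fin n, (1 / (s (i:ℕ) : ℝ)) := by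
      rw [Finset.mul_sum]; apply Finset.sum_congr rfl; intro i _; rw [hc]; ring
    rw [this, key n]; field_simp; ring
  have hcpos : ∀ i : Fin n, 0 < c i := by
    intro i
    apply div_pos <;> [skip; skip] <;> have := hsR n <;> have := hsR i <;> linarith
  -- strict sum bound
  obtain ⟨j, hjn, hjx⟩ := hx2
  have hlt : ∑ i : Fin n, (-(c i * x i.castSucc)) < ∑ i : Fin n, c i := by
    apply Finset.sum_lt_sum (f := fun i => -(c i * x i.castSucc)) (g := c)
    · intro i _
      have h1 := hx1 i.castSucc
      have h2 := hcpos i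
      nlinarith
    · refine ⟨⟨(j:ℕ), hjn⟩, Finset.mem_univ _, ?_⟩
      have hcast : (Fin.castSucc ⟨(j:ℕ), hjn⟩) = j := by
        ext; simp
      rw [hcast]
      have h2 := hcpos ⟨(j:ℕ), hjn⟩
      nlinarith
  calc x (Fin.last n) = ∑ i : Fin n, (-(c i * x i.castSucc)) := by
        rw [hx3, ← Finset.sum_neg_distrib]
    _ < ∑ i : Fin n, c i := hlt
    _ = (s n : ℝ) - 2 := hcsum
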